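/- Let f, g : K → K be functions and λ₁, λ₂, λ₃ ∈ K be such that f(λ₁), f(λ₂), f(λ₃) are pairwise distinct. Define, for distinct k, l ∈ {1,2,3}, t_{kl} = (g(λ_l)/(f(λ_k) − f(λ_l)))·(C_{kl} + σ̂_{kl}) ∈ U(g)^{⊗3}. Then t satisfies the classical Yang–Baxter equation: YB(t)_{123} = 0. -/

import Mathlib

open scoped TensorProduct

noncomputable section

/-- `Σ i, u i ⊗ v i ⊗ 1` in `U(g)⊗U(g)⊗U(g)`: the tensor with factors in positions 1, 2. -/
def tensor12 (K : Type*) {L I : Type*} [Field K] [LieRing L] [LieAlgebra K L]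
    [Fintype I] (u v : I → L) :
    UniversalEnvelopingAlgebra K L ⊗[K]
      (UniversalEnvelopingAlgebra K L ⊗[K] UniversalEnvelopingAlgebra K L) :=
  ∑ i, UniversalEnvelopingAlgebra.ι K (u i) ⊗ₜ[K]
        (UniversalEnvelopingAlgebra.ι K (v i) ⊗ₜ[K] 1)

/-- `Σ i, u i ⊗ 1 ⊗ v i`: the tensor with factors in positions 1, 3. -/
def tensor13 (K : Type*) {L I : Type*} [Field K] [LieRing L] [LieAlgebra K L]
    [Fintype I] (u v : I → L) :
    UniversalEnvelopingAlgebra K L ⊗[K]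
      (UniversalEnvelopingAlgebra K L ⊗[K] UniversalEnvelopingAlgebra K L) :=
  ∑ i, UniversalEnvelopingAlgebra.ι K (u i) ⊗ₜ[K]
        ((1 : UniversalEnvelopingAlgebra K L) ⊗ₜ[K] UniversalEnvelopingAlgebra.ι K (v i))

/-- `Σ i, 1 ⊗ u i ⊗ v i`: the tensor with factors in positions 2, 3. -/
def tensor23 (K : Type*) {L I : Type*} [Field K] [LieRing L] [LieAlgebra K L]
    [Fintype I] (u v : I → L) :
    UniversalEnvelopingAlgebra K L ⊗[K]
      (UniversalEnvelopingAlgebra K L ⊗[K] UniversalEnvelopingAlgebra K L) :=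
  ∑ i, (1 : UniversalEnvelopingAlgebra K L) ⊗ₜ[K]
        (UniversalEnvelopingAlgebra.ι K (u i) ⊗ₜ[K] UniversalEnvelopingAlgebra.ι K (v i))

namespace CYBEAux
open TensorProduct
variable {K L I : Type*} [Field K] [LieRing L] [LieAlgebra K L] [Fintype I] [DecidableEq I]

/-- right bracket as a linear map: `y ↦ ⁅y, x⁆`. -/
def brR (K : Type*) {L : Type*} [Field K] [LieRing L] [LieAlgebra K L] (x : L) : L →ₗ[K] L where
  toFun y := ⁅y, x⁆
  map_add' a b := add_lie a b x
  map_smul' c a := smul_lie c a x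

@[simp] lemma brR_apply (x y : L) : brR K x y = ⁅y, x⁆ := rfl

variable (B : LinearMap.BilinForm K L)
  (hBsymm : ∀ x y, B x y = B y x)
  (hBinv : ∀ x y z, B ⁅x, y⁆ z = B x ⁅y, z⁆)
  (hBnd : B.Nondegenerate)
  (e : Module.Basis I K L) (e' : I → L)
  (hdual : ∀ i j, B (e i) (e' j) = if i = j then 1 else 0)
  (σ : L →ₗ[K] L)
  (hσinv : ∀ x, σ (σ x) = x)
  (hσlie : ∀ x y, σ ⁅x, y⁆ = ⁅σ x, σ y⁆)
  (hσB : ∀ x y, B (σ x) (σ y) = B x y)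

include hdual in
lemma expand1 (y : L) : ∑ k, (B y (e' k)) • e k = y := by
  have hrep : ∀ k, B y (e' k) = e.repr y k := by
    intro k
    conv_lhs => rw [← e.sum_repr y]
    simp only [map_sum]
    simp [Finset.sum_apply', hdual, mul_ite]
  calc ∑ k, (B y (e' k)) • e k = ∑ k, e.repr y k • e k :=
        Finset.sum_congr rfl fun k _ => by rw [hrep k]
    _ = y := e.sum_repr y

include hBsymm hBnd hdual in
lemma expand2 (y : L) : ∑ k, (B (e k) y) • e' k = y := by
  have h : ∀ n, B (∑ k, (B (e k) y) • e' k - y) n = 0 := by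
    intro n
    have hn : B y n = ∑ k, (B n (e' k)) * B (e k) y := by
      conv_lhs => rw [hBsymm, ← expand1 B e e' hdual n]
      simp [Finset.sum_apply']
    have h2 : B (∑ k, (B (e k) y) • e' k) n = ∑ k, (B (e k) y) * B (e' k) n := by
      simp [Finset.sum_apply']
    rw [map_sub, LinearMap.sub_apply, h2, hn, sub_eq_zero]
    refine Finset.sum_congr rfl fun k _ => ?_
    rw [hBsymm (e' k) n]; ring
  have := hBnd.1 _ h
  rw [sub_eq_zero] at this
  exact this

include hBsymm hBinv hBnd hdual in
lemma invC (x : L) :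
    ∑ j, (⁅x, e j⁆ ⊗ₜ[K] e' j + e j ⊗ₜ[K] ⁅x, e' j⁆) = (0 : L ⊗[K] L) := by
  have h1 : ∀ j, ⁅x, e j⁆ ⊗ₜ[K] e' j = ∑ k, (B ⁅x, e j⁆ (e' k)) • (e k ⊗ₜ[K] e' j) := by
    intro j
    conv_lhs => rw [← expand1 B e e' hdual ⁅x, e j⁆]
    rw [sum_tmul]
    exact Finset.sum_congr rfl fun k _ => by rw [smul_tmul']
  have h2 : ∀ j, e j ⊗ₜ[K] ⁅x, e' j⁆ = ∑ k, (B (e k) ⁅x, e' j⁆) • (e j ⊗ₜ[K] e' k) := by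
    intro j
    conv_lhs => rw [← expand2 B hBsymm hBnd e e' hdual ⁅x, e' j⁆]
    rw [tmul_sum]
    exact Finset.sum_congr rfl fun k _ => by rw [tmul_smul]
  calc ∑ j, (⁅x, e j⁆ ⊗ₜ[K] e' j + e j ⊗ₜ[K] ⁅x, e' j⁆)
      = ∑ j, ∑ k, ((B ⁅x, e j⁆ (e' k)) • (e k ⊗ₜ[K] e' j)
          + (B (e k) ⁅x, e' j⁆) • (e j ⊗ₜ[K] e' k)) := by
        refine Finset.sum_congr rfl fun j _ => ?_
        rw [h1 j, h2 j, Finset.sum_add_distrib]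
    _ = ∑ j, ∑ k, ((B ⁅x, e j⁆ (e' k)) • (e k ⊗ₜ[K] e' j)
          + (B (e j) ⁅x, e' k⁆) • (e k ⊗ₜ[K] e' j)) := by
        simp only [Finset.sum_add_distrib]
        rw [Finset.sum_comm (f := fun j k => (B (e k) ⁅x, e' j⁆) • (e j ⊗ₜ[K] e' k))]
    _ = 0 := by
        refine Finset.sum_eq_zero fun j _ => Finset.sum_eq_zero fun k _ => ?_
        rw [← add_smul]
        have hz : B ⁅x, e j⁆ (e' k) + B (e j) ⁅x, e' k⁆ = 0 := by
          have h := hBinv (e j) x (e' k)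
          rw [show (⁅x, e j⁆ : L) = -⁅e j, x⁆ from (lie_skew x (e j)).symm,
            map_neg, LinearMap.neg_apply, h]; ring
        rw [hz, zero_smul]

include hBsymm hBinv hBnd hdual hσlie in
lemma invσL (x : L) :
    ∑ j, (⁅σ x, σ (e j)⁆ ⊗ₜ[K] e' j + σ (e j) ⊗ₜ[K] ⁅x, e' j⁆) = (0 : L ⊗[K] L) := by
  have h := congrArg (TensorProduct.map σ (LinearMap.id (R := K) (M := L)))
    (invC B hBsymm hBinv hBnd e e' hdual x)
  simpa [map_sum, map_add, TensorProduct.map_tmul, hσlie] using h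

include hBsymm hBinv hBnd hdual hσlie in
lemma invσR (x : L) :
    ∑ j, (⁅x, e j⁆ ⊗ₜ[K] σ (e' j) + e j ⊗ₜ[K] ⁅σ x, σ (e' j)⁆) = (0 : L ⊗[K] L) := by
  have h := congrArg (TensorProduct.map (LinearMap.id (R := K) (M := L)) σ)
    (invC B hBsymm hBinv hBnd e e' hdual x)
  simpa [map_sum, map_add, TensorProduct.map_tmul, hσlie] using h


include hBsymm hBinv hBnd hdual hσlie in
lemma P1 (x : L) (hx : σ x = x) :
    ∑ j, (⁅e j + σ (e j), x⁆ ⊗ₜ[K] e' j + (e j + σ (e j)) ⊗ₜ[K] ⁅e' j, x⁆)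
      = (0 : L ⊗[K] L) := by
  have hC := invC B hBsymm hBinv hBnd e e' hdual x
  have hS := invσL B hBsymm hBinv hBnd e e' hdual σ hσlie x
  rw [hx] at hS
  have key : ∑ j, (⁅x, e j + σ (e j)⁆ ⊗ₜ[K] e' j + (e j + σ (e j)) ⊗ₜ[K] ⁅x, e' j⁆)
      = (0 : L ⊗[K] L) := by
    have hadd : ∑ j, ((⁅x, e j⁆ ⊗ₜ[K] e' j + e j ⊗ₜ[K] ⁅x, e' j⁆)
        + (⁅x, σ (e j)⁆ ⊗ₜ[K] e' j + σ (e j) ⊗ₜ[K] ⁅x, e' j⁆)) = (0 : L ⊗[K] L) := by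
      rw [Finset.sum_add_distrib, hC, hS, add_zero]
    rw [← hadd]
    refine Finset.sum_congr rfl fun j _ => ?_
    rw [lie_add, add_tmul, add_tmul]
    abel
  calc ∑ j, (⁅e j + σ (e j), x⁆ ⊗ₜ[K] e' j + (e j + σ (e j)) ⊗ₜ[K] ⁅e' j, x⁆)
      = -∑ j, (⁅x, e j + σ (e j)⁆ ⊗ₜ[K] e' j + (e j + σ (e j)) ⊗ₜ[K] ⁅x, e' j⁆) := by
        rw [← Finset.sum_neg_distrib]
        refine Finset.sum_congr rfl fun j _ => ?_
        rw [neg_add, ← neg_tmul, ← tmul_neg, lie_skew, lie_skew]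
    _ = 0 := by rw [key, neg_zero]

include hBsymm hBinv hBnd hdual hσlie in
lemma P3 (x : L) (hx : σ x = x) :
    ∑ j, (⁅x, e j⁆ ⊗ₜ[K] (e' j + σ (e' j)) + e j ⊗ₜ[K] ⁅x, e' j + σ (e' j)⁆)
      = (0 : L ⊗[K] L) := by
  have hC := invC B hBsymm hBinv hBnd e e' hdual x
  have hS := invσR B hBsymm hBinv hBnd e e' hdual σ hσlie x
  rw [hx] at hS
  have hadd : ∑ j, ((⁅x, e j⁆ ⊗ₜ[K] e' j + e j ⊗ₜ[K] ⁅x, e' j⁆)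
      + (⁅x, e j⁆ ⊗ₜ[K] σ (e' j) + e j ⊗ₜ[K] ⁅x, σ (e' j)⁆)) = (0 : L ⊗[K] L) := by
    rw [Finset.sum_add_distrib, hC, hS, add_zero]
  rw [← hadd]
  refine Finset.sum_congr rfl fun j _ => ?_
  rw [lie_add, tmul_add, tmul_add]
  abel

include hBsymm hBnd hdual hσinv hσB in
lemma symmσ : ∑ j, σ (e j) ⊗ₜ[K] e' j = ∑ j, e j ⊗ₜ[K] σ (e' j) := by
  have h1 : ∀ j, σ (e j) ⊗ₜ[K] e' j
      = ∑ k, (B (σ (e j)) (e' k)) • (e k ⊗ₜ[K] e' j) := by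
    intro j
    conv_lhs => rw [← expand1 B e e' hdual (σ (e j))]
    rw [sum_tmul]
    exact Finset.sum_congr rfl fun k _ => by rw [smul_tmul']
  have h2 : ∀ j, e j ⊗ₜ[K] σ (e' j)
      = ∑ k, (B (e k) (σ (e' j))) • (e j ⊗ₜ[K] e' k) := by
    intro j
    conv_lhs => rw [← expand2 B hBsymm hBnd e e' hdual (σ (e' j))]
    rw [tmul_sum]
    exact Finset.sum_congr rfl fun k _ => by rw [tmul_smul]
  calc ∑ j, σ (e j) ⊗ₜ[K] e' j
      = ∑ j, ∑ k, (B (σ (e j)) (e' k)) • (e k ⊗ₜ[K] e' j) :=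
        Finset.sum_congr rfl fun j _ => h1 j
    _ = ∑ j, ∑ k, (B (e j) (σ (e' k))) • (e k ⊗ₜ[K] e' j) := by
        refine Finset.sum_congr rfl fun j _ => Finset.sum_congr rfl fun k _ => ?_
        congr 1
        have := hσB (e j) (σ (e' k))
        rw [hσinv] at this
        exact this
    _ = ∑ k, ∑ j, (B (e j) (σ (e' k))) • (e k ⊗ₜ[K] e' j) := Finset.sum_comm
    _ = ∑ j, e j ⊗ₜ[K] σ (e' j) := by
        refine Finset.sum_congr rfl fun k _ => ?_
        exact (h2 k).symm

include hBsymm hBnd hdual hσinv hσB in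
lemma P4 : ∑ j, (e j ⊗ₜ[K] (e' j + σ (e' j)))
    = ∑ j, ((e j + σ (e j)) ⊗ₜ[K] e' j) := by
  have := symmσ B hBsymm hBnd e e' hdual σ hσinv hσB
  simp only [tmul_add, add_tmul, Finset.sum_add_distrib]
  rw [this]


include hBsymm hBinv hBnd hdual hσinv hσlie in
lemma lemXY :
    ∑ j, ∑ i, (⁅e j + σ (e j), e i + σ (e i)⁆ ⊗ₜ[K] (e' j ⊗ₜ[K] e' i)
      + (e j + σ (e j)) ⊗ₜ[K] (⁅e' j, e i + σ (e i)⁆ ⊗ₜ[K] e' i))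
    = (0 : L ⊗[K] (L ⊗[K] L)) := by
  rw [Finset.sum_comm]
  refine Finset.sum_eq_zero fun i _ => ?_
  have hfix : σ (e i + σ (e i)) = e i + σ (e i) := by
    rw [map_add, hσinv]; exact add_comm _ _
  have h := P1 B hBsymm hBinv hBnd e e' hdual σ hσlie (e i + σ (e i)) hfix
  have h2 := congrArg
    (TensorProduct.map (LinearMap.id (R := K) (M := L))
      ((TensorProduct.mk K L L).flip (e' i))) h
  rw [map_zero, map_sum] at h2
  calc ∑ j, (⁅e j + σ (e j), e i + σ (e i)⁆ ⊗ₜ[K] (e' j ⊗ₜ[K] e' i)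
        + (e j + σ (e j)) ⊗ₜ[K] (⁅e' j, e i + σ (e i)⁆ ⊗ₜ[K] e' i))
      = ∑ j, (TensorProduct.map (LinearMap.id (R := K) (M := L))
          ((TensorProduct.mk K L L).flip (e' i)))
          (⁅e j + σ (e j), e i + σ (e i)⁆ ⊗ₜ[K] e' j
            + (e j + σ (e j)) ⊗ₜ[K] ⁅e' j, e i + σ (e i)⁆) :=
        Finset.sum_congr rfl fun j _ => by
          simp only [map_add, TensorProduct.map_tmul, LinearMap.id_coe, id_eq,
            LinearMap.flip_apply, TensorProduct.mk_apply]
    _ = 0 := h2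

include hBsymm hBinv hBnd hdual hσinv hσlie hσB in
lemma lemZX :
    ∑ j, ∑ i, ((e j + σ (e j)) ⊗ₜ[K] ((e i + σ (e i)) ⊗ₜ[K] ⁅e' j, e' i⁆))
    = ∑ j, ∑ i, (⁅e j + σ (e j), e i + σ (e i)⁆ ⊗ₜ[K] (e' j ⊗ₜ[K] e' i)) := by
  have hP4 := P4 B hBsymm hBnd e e' hdual σ hσinv hσB
  have hGfix : ∀ j, σ (e' j + σ (e' j)) = e' j + σ (e' j) := by
    intro j; rw [map_add, hσinv]; exact add_comm _ _
  have hFfix : ∀ i, σ (e i + σ (e i)) = e i + σ (e i) := by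
    intro i; rw [map_add, hσinv]; exact add_comm _ _
  calc ∑ j, ∑ i, ((e j + σ (e j)) ⊗ₜ[K] ((e i + σ (e i)) ⊗ₜ[K] ⁅e' j, e' i⁆))
      -- step (a)
      = ∑ i, ∑ j, (e j ⊗ₜ[K] ((e i + σ (e i)) ⊗ₜ[K] ⁅e' j + σ (e' j), e' i⁆)) := by
        rw [Finset.sum_comm]
        refine Finset.sum_congr rfl fun i _ => ?_
        have h2 := congrArg
          (TensorProduct.map (LinearMap.id (R := K) (M := L))
            ((TensorProduct.mk K L L (e i + σ (e i))).comp (brR K (e' i)))) hP4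
        rw [map_sum, map_sum] at h2
        calc ∑ j, ((e j + σ (e j)) ⊗ₜ[K] ((e i + σ (e i)) ⊗ₜ[K] ⁅e' j, e' i⁆))
            = ∑ j, (TensorProduct.map (LinearMap.id (R := K) (M := L))
                ((TensorProduct.mk K L L (e i + σ (e i))).comp (brR K (e' i))))
                ((e j + σ (e j)) ⊗ₜ[K] e' j) :=
              Finset.sum_congr rfl fun j _ => by
                simp only [TensorProduct.map_tmul, LinearMap.id_coe, id_eq,
                  LinearMap.coe_comp, Function.comp_apply, brR_apply,
                  TensorProduct.mk_apply]
          _ = ∑ j, (TensorProduct.map (LinearMap.id (R := K) (M := L))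
                ((TensorProduct.mk K L L (e i + σ (e i))).comp (brR K (e' i))))
                (e j ⊗ₜ[K] (e' j + σ (e' j))) := h2.symm
          _ = ∑ j, (e j ⊗ₜ[K] ((e i + σ (e i)) ⊗ₜ[K] ⁅e' j + σ (e' j), e' i⁆)) :=
              Finset.sum_congr rfl fun j _ => by
                simp only [TensorProduct.map_tmul, LinearMap.id_coe, id_eq,
                  LinearMap.coe_comp, Function.comp_apply, brR_apply,
                  TensorProduct.mk_apply]
      -- step (b)
    _ = ∑ i, ∑ j, (e j ⊗ₜ[K] (⁅e i + σ (e i), e' j + σ (e' j)⁆ ⊗ₜ[K] e' i)) := by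
        rw [Finset.sum_comm, Finset.sum_comm
          (f := fun i j => e j ⊗ₜ[K] (⁅e i + σ (e i), e' j + σ (e' j)⁆ ⊗ₜ[K] e' i))]
        refine Finset.sum_congr rfl fun j _ => ?_
        have h := P1 B hBsymm hBinv hBnd e e' hdual σ hσlie (e' j + σ (e' j)) (hGfix j)
        rw [Finset.sum_add_distrib] at h
        have hswap : ∑ i, ((e i + σ (e i)) ⊗ₜ[K] ⁅e' j + σ (e' j), e' i⁆)
            = ∑ i, (⁅e i + σ (e i), e' j + σ (e' j)⁆ ⊗ₜ[K] e' i) := by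
          have h3 : ∑ i, ((e i + σ (e i)) ⊗ₜ[K] ⁅e' j + σ (e' j), e' i⁆)
              = -∑ i, ((e i + σ (e i)) ⊗ₜ[K] ⁅e' i, e' j + σ (e' j)⁆) := by
            rw [← Finset.sum_neg_distrib]
            exact Finset.sum_congr rfl fun i _ => by rw [← tmul_neg, lie_skew]
          rw [h3]
          exact (eq_neg_of_add_eq_zero_left h).symm
        calc ∑ i, (e j ⊗ₜ[K] ((e i + σ (e i)) ⊗ₜ[K] ⁅e' j + σ (e' j), e' i⁆))
            = e j ⊗ₜ[K] ∑ i, ((e i + σ (e i)) ⊗ₜ[K] ⁅e' j + σ (e' j), e' i⁆) := by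
              rw [tmul_sum]
          _ = e j ⊗ₜ[K] ∑ i, (⁅e i + σ (e i), e' j + σ (e' j)⁆ ⊗ₜ[K] e' i) := by
              rw [hswap]
          _ = ∑ i, (e j ⊗ₜ[K] (⁅e i + σ (e i), e' j + σ (e' j)⁆ ⊗ₜ[K] e' i)) := by
              rw [tmul_sum]
      -- step (c)
    _ = ∑ i, ∑ j, (⁅e j, e i + σ (e i)⁆ ⊗ₜ[K] ((e' j + σ (e' j)) ⊗ₜ[K] e' i)) := by
        refine Finset.sum_congr rfl fun i _ => ?_
        have h := P3 B hBsymm hBinv hBnd e e' hdual σ hσlie (e i + σ (e i)) (hFfix i)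
        rw [Finset.sum_add_distrib] at h
        have hswap : ∑ j, (e j ⊗ₜ[K] ⁅e i + σ (e i), e' j + σ (e' j)⁆)
            = ∑ j, (⁅e j, e i + σ (e i)⁆ ⊗ₜ[K] (e' j + σ (e' j))) := by
          have h3 : ∑ j, (⁅e j, e i + σ (e i)⁆ ⊗ₜ[K] (e' j + σ (e' j)))
              = -∑ j, (⁅e i + σ (e i), e j⁆ ⊗ₜ[K] (e' j + σ (e' j))) := by
            rw [← Finset.sum_neg_distrib]
            exact Finset.sum_congr rfl fun j _ => by rw [← neg_tmul, lie_skew]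
          rw [h3]
          exact eq_neg_of_add_eq_zero_right h
        have h4 := congrArg
          (TensorProduct.map (LinearMap.id (R := K) (M := L))
            ((TensorProduct.mk K L L).flip (e' i))) hswap
        rw [map_sum, map_sum] at h4
        calc ∑ j, (e j ⊗ₜ[K] (⁅e i + σ (e i), e' j + σ (e' j)⁆ ⊗ₜ[K] e' i))
            = ∑ j, (TensorProduct.map (LinearMap.id (R := K) (M := L))
                ((TensorProduct.mk K L L).flip (e' i)))
                (e j ⊗ₜ[K] ⁅e i + σ (e i), e' j + σ (e' j)⁆) :=
              Finset.sum_congr rfl fun j _ => by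
                simp only [TensorProduct.map_tmul, LinearMap.id_coe, id_eq,
                  LinearMap.flip_apply, TensorProduct.mk_apply]
          _ = ∑ j, (TensorProduct.map (LinearMap.id (R := K) (M := L))
                ((TensorProduct.mk K L L).flip (e' i)))
                (⁅e j, e i + σ (e i)⁆ ⊗ₜ[K] (e' j + σ (e' j))) := h4
          _ = ∑ j, (⁅e j, e i + σ (e i)⁆ ⊗ₜ[K] ((e' j + σ (e' j)) ⊗ₜ[K] e' i)) :=
              Finset.sum_congr rfl fun j _ => by
                simp only [TensorProduct.map_tmul, LinearMap.id_coe, id_eq,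
                  LinearMap.flip_apply, TensorProduct.mk_apply]
      -- step (d)
    _ = ∑ j, ∑ i, (⁅e j + σ (e j), e i + σ (e i)⁆ ⊗ₜ[K] (e' j ⊗ₜ[K] e' i)) := by
        rw [Finset.sum_comm
          (f := fun j i => ⁅e j + σ (e j), e i + σ (e i)⁆ ⊗ₜ[K] (e' j ⊗ₜ[K] e' i))]
        refine Finset.sum_congr rfl fun i _ => ?_
        have h2 := congrArg
          (TensorProduct.map (brR K (e i + σ (e i)))
            ((TensorProduct.mk K L L).flip (e' i))) hP4
        rw [map_sum, map_sum] at h2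
        calc ∑ j, (⁅e j, e i + σ (e i)⁆ ⊗ₜ[K] ((e' j + σ (e' j)) ⊗ₜ[K] e' i))
            = ∑ j, (TensorProduct.map (brR K (e i + σ (e i)))
                ((TensorProduct.mk K L L).flip (e' i)))
                (e j ⊗ₜ[K] (e' j + σ (e' j))) :=
              Finset.sum_congr rfl fun j _ => by
                simp only [TensorProduct.map_tmul, brR_apply,
                  LinearMap.flip_apply, TensorProduct.mk_apply]
          _ = ∑ j, (TensorProduct.map (brR K (e i + σ (e i)))
                ((TensorProduct.mk K L L).flip (e' i)))
                ((e j + σ (e j)) ⊗ₜ[K] e' j) := h2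
          _ = ∑ j, (⁅e j + σ (e j), e i + σ (e i)⁆ ⊗ₜ[K] (e' j ⊗ₜ[K] e' i)) :=
              Finset.sum_congr rfl fun j _ => by
                simp only [TensorProduct.map_tmul, brR_apply,
                  LinearMap.flip_apply, TensorProduct.mk_apply]

end CYBEAux

namespace CYBEAux2
variable {K L I : Type*} [Field K] [LieRing L] [LieAlgebra K L] [Fintype I]

local notation "ι" => UniversalEnvelopingAlgebra.ι K

lemma tensor12_add (u u' v : I → L) :
    tensor12 K u v + tensor12 K u' v = tensor12 K (fun j => u j + u' j) v := by
  rw [tensor12, tensor12, tensor12, ← Finset.sum_add_distrib]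
  exact Finset.sum_congr rfl fun j _ => by rw [map_add, TensorProduct.add_tmul]

lemma tensor13_add (u u' v : I → L) :
    tensor13 K u v + tensor13 K u' v = tensor13 K (fun j => u j + u' j) v := by
  rw [tensor13, tensor13, tensor13, ← Finset.sum_add_distrib]
  exact Finset.sum_congr rfl fun j _ => by rw [map_add, TensorProduct.add_tmul]

lemma tensor23_add (u u' v : I → L) :
    tensor23 K u v + tensor23 K u' v = tensor23 K (fun j => u j + u' j) v := by
  rw [tensor23, tensor23, tensor23, ← Finset.sum_add_distrib]
  exact Finset.sum_congr rfl fun j _ => by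
    rw [map_add, TensorProduct.add_tmul, TensorProduct.tmul_add]

lemma br1213 (u v x y : I → L) :
    ⁅tensor12 K u v, tensor13 K x y⁆
      = ∑ j, ∑ i, (ι ⁅u j, x i⁆) ⊗ₜ[K] ((ι (v j)) ⊗ₜ[K] (ι (y i))) := by
  rw [Ring.lie_def, tensor12, tensor13, Finset.sum_mul_sum, Finset.sum_mul_sum]
  rw [Finset.sum_comm (f := fun i j => (ι (x i) ⊗ₜ[K] ((1:UniversalEnvelopingAlgebra K L) ⊗ₜ[K] ι (y i))) * (ι (u j) ⊗ₜ[K] (ι (v j) ⊗ₜ[K] (1:UniversalEnvelopingAlgebra K L))))]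
  rw [← Finset.sum_sub_distrib]
  refine Finset.sum_congr rfl fun j _ => ?_
  rw [← Finset.sum_sub_distrib]
  refine Finset.sum_congr rfl fun i _ => ?_
  simp only [Algebra.TensorProduct.tmul_mul_tmul, one_mul, mul_one,
    LieHom.map_lie, Ring.lie_def, TensorProduct.sub_tmul]

lemma br1223 (u v x y : I → L) :
    ⁅tensor12 K u v, tensor23 K x y⁆
      = ∑ j, ∑ i, (ι (u j)) ⊗ₜ[K] ((ι ⁅v j, x i⁆) ⊗ₜ[K] (ι (y i))) := by
  rw [Ring.lie_def, tensor12, tensor23, Finset.sum_mul_sum, Finset.sum_mul_sum]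
  rw [Finset.sum_comm (f := fun i j => ((1:UniversalEnvelopingAlgebra K L) ⊗ₜ[K] (ι (x i) ⊗ₜ[K] ι (y i))) * (ι (u j) ⊗ₜ[K] (ι (v j) ⊗ₜ[K] (1:UniversalEnvelopingAlgebra K L))))]
  rw [← Finset.sum_sub_distrib]
  refine Finset.sum_congr rfl fun j _ => ?_
  rw [← Finset.sum_sub_distrib]
  refine Finset.sum_congr rfl fun i _ => ?_
  simp only [Algebra.TensorProduct.tmul_mul_tmul, one_mul, mul_one,
    LieHom.map_lie, Ring.lie_def, TensorProduct.sub_tmul, TensorProduct.tmul_sub]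

lemma br1323 (u v x y : I → L) :
    ⁅tensor13 K u v, tensor23 K x y⁆
      = ∑ j, ∑ i, (ι (u j)) ⊗ₜ[K] ((ι (x i)) ⊗ₜ[K] (ι ⁅v j, y i⁆)) := by
  rw [Ring.lie_def, tensor13, tensor23, Finset.sum_mul_sum, Finset.sum_mul_sum]
  rw [Finset.sum_comm (f := fun i j => ((1:UniversalEnvelopingAlgebra K L) ⊗ₜ[K] (ι (x i) ⊗ₜ[K] ι (y i))) * (ι (u j) ⊗ₜ[K] ((1:UniversalEnvelopingAlgebra K L) ⊗ₜ[K] ι (v j))))]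
  rw [← Finset.sum_sub_distrib]
  refine Finset.sum_congr rfl fun j _ => ?_
  rw [← Finset.sum_sub_distrib]
  refine Finset.sum_congr rfl fun i _ => ?_
  simp only [Algebra.TensorProduct.tmul_mul_tmul, one_mul, mul_one,
    LieHom.map_lie, Ring.lie_def, TensorProduct.sub_tmul, TensorProduct.tmul_sub]

end CYBEAux2



open CYBEAux CYBEAux2 in
/-- Solution (ii) of the classification:
`t_{kl} = (g(λ_l)/(f(λ_k) − f(λ_l)))·(C_{kl} + σ̂_{kl})` satisfies the classical
Yang–Baxter equation `YB(t)₁₂₃ = 0`. -/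
theorem cybe_solution_ii
    {K L I : Type*} [Field K] [CharZero K] [LieRing L] [LieAlgebra K L]
    [Module.Finite K L] [Fintype I] [DecidableEq I]
    (B : LinearMap.BilinForm K L)
    (hBsymm : ∀ x y, B x y = B y x)
    (hBinv : ∀ x y z, B ⁅x, y⁆ z = B x ⁅y, z⁆)
    (hBnd : B.Nondegenerate)
    (e : Module.Basis I K L) (e' : I → L)
    (hdual : ∀ i j, B (e i) (e' j) = if i = j then 1 else 0)
    (σ : L →ₗ[K] L)
    (hσinv : ∀ x, σ (σ x) = x)
    (hσlie : ∀ x y, σ ⁅x, y⁆ = ⁅σ x, σ y⁆)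
    (hσB : ∀ x y, B (σ x) (σ y) = B x y)
    (f g : K → K) (l1 l2 l3 : K)
    (h12 : f l1 ≠ f l2) (h13 : f l1 ≠ f l3) (h23 : f l2 ≠ f l3) :
    ⁅(g l2 / (f l1 - f l2)) • (tensor12 K (⇑e) e' + tensor12 K (fun i => σ (e i)) e'),
      (g l3 / (f l1 - f l3)) • (tensor13 K (⇑e) e' + tensor13 K (fun i => σ (e i)) e')⁆
    + ⁅(g l2 / (f l1 - f l2)) • (tensor12 K (⇑e) e' + tensor12 K (fun i => σ (e i)) e'),
        (g l3 / (f l2 - f l3)) • (tensor23 K (⇑e) e' + tensor23 K (fun i => σ (e i)) e')⁆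
    - ⁅(g l3 / (f l1 - f l3)) • (tensor13 K (⇑e) e' + tensor13 K (fun i => σ (e i)) e'),
        (g l2 / (f l3 - f l2)) • (tensor23 K (⇑e) e' + tensor23 K (fun i => σ (e i)) e')⁆
    = 0 := by
  set α : K := g l2 / (f l1 - f l2) with hα
  set β : K := g l3 / (f l1 - f l3) with hβ
  set γ : K := g l3 / (f l2 - f l3) with hγ
  set δ : K := g l2 / (f l3 - f l2) with hδ
  have hadd12 : tensor12 K (⇑e) e' + tensor12 K (fun i => σ (e i)) e'
      = tensor12 K (fun j => e j + σ (e j)) e' := tensor12_add _ _ _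
  have hadd13 : tensor13 K (⇑e) e' + tensor13 K (fun i => σ (e i)) e'
      = tensor13 K (fun j => e j + σ (e j)) e' := tensor13_add _ _ _
  have hadd23 : tensor23 K (⇑e) e' + tensor23 K (fun i => σ (e i)) e'
      = tensor23 K (fun j => e j + σ (e j)) e' := tensor23_add _ _ _
  rw [hadd12, hadd13, hadd23]
  have hsmul : ∀ (r s : K) (x y : UniversalEnvelopingAlgebra K L ⊗[K]
      (UniversalEnvelopingAlgebra K L ⊗[K] UniversalEnvelopingAlgebra K L)),
      ⁅r • x, s • y⁆ = (r * s) • ⁅x, y⁆ := by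
    intro r s x y
    rw [Ring.lie_def, Ring.lie_def, smul_mul_assoc, mul_smul_comm, smul_mul_assoc,
      mul_smul_comm, smul_smul, smul_smul, mul_comm s r, smul_sub]
  rw [hsmul, hsmul, hsmul]
  rw [br1213, br1223, br1323]
  -- push everything to `L ⊗ (L ⊗ L)` through `Φ`
  letI : LieRing (UniversalEnvelopingAlgebra K L) := LieRing.ofAssociativeRing
  letI : LieAlgebra K (UniversalEnvelopingAlgebra K L) := LieAlgebra.ofAssociativeAlgebra
  set ιL : L →ₗ[K] UniversalEnvelopingAlgebra K L :=
    (UniversalEnvelopingAlgebra.ι K : L →ₗ⁅K⁆ UniversalEnvelopingAlgebra K L).toLinearMap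
    with hιL
  set Φ : L ⊗[K] (L ⊗[K] L) →ₗ[K] UniversalEnvelopingAlgebra K L ⊗[K]
      (UniversalEnvelopingAlgebra K L ⊗[K] UniversalEnvelopingAlgebra K L) :=
    TensorProduct.map ιL (TensorProduct.map ιL ιL) with hΦ
  have hmap : ∀ a b c : L,
      (UniversalEnvelopingAlgebra.ι K a) ⊗ₜ[K]
        ((UniversalEnvelopingAlgebra.ι K b) ⊗ₜ[K] (UniversalEnvelopingAlgebra.ι K c))
      = Φ (a ⊗ₜ[K] (b ⊗ₜ[K] c)) := by
    intro a b c
    simp only [hΦ, TensorProduct.map_tmul, hιL, LieHom.coe_toLinearMap]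
  have hφ1 : ∑ j, ∑ i,
      (UniversalEnvelopingAlgebra.ι K ⁅e j + σ (e j), e i + σ (e i)⁆) ⊗ₜ[K]
        ((UniversalEnvelopingAlgebra.ι K (e' j)) ⊗ₜ[K] (UniversalEnvelopingAlgebra.ι K (e' i)))
      = Φ (∑ j, ∑ i, ⁅e j + σ (e j), e i + σ (e i)⁆ ⊗ₜ[K] (e' j ⊗ₜ[K] e' i)) := by
    rw [map_sum]
    refine Finset.sum_congr rfl fun j _ => ?_
    rw [map_sum]
    exact Finset.sum_congr rfl fun i _ => hmap _ _ _
  have hφ2 : ∑ j, ∑ i,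
      (UniversalEnvelopingAlgebra.ι K (e j + σ (e j))) ⊗ₜ[K]
        ((UniversalEnvelopingAlgebra.ι K ⁅e' j, e i + σ (e i)⁆) ⊗ₜ[K]
          (UniversalEnvelopingAlgebra.ι K (e' i)))
      = Φ (∑ j, ∑ i, (e j + σ (e j)) ⊗ₜ[K] (⁅e' j, e i + σ (e i)⁆ ⊗ₜ[K] e' i)) := by
    rw [map_sum]
    refine Finset.sum_congr rfl fun j _ => ?_
    rw [map_sum]
    exact Finset.sum_congr rfl fun i _ => hmap _ _ _
  have hφ3 : ∑ j, ∑ i,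
      (UniversalEnvelopingAlgebra.ι K (e j + σ (e j))) ⊗ₜ[K]
        ((UniversalEnvelopingAlgebra.ι K (e i + σ (e i))) ⊗ₜ[K]
          (UniversalEnvelopingAlgebra.ι K ⁅e' j, e' i⁆))
      = Φ (∑ j, ∑ i, (e j + σ (e j)) ⊗ₜ[K] ((e i + σ (e i)) ⊗ₜ[K] ⁅e' j, e' i⁆)) := by
    rw [map_sum]
    refine Finset.sum_congr rfl fun j _ => ?_
    rw [map_sum]
    exact Finset.sum_congr rfl fun i _ => hmap _ _ _
  rw [hφ1, hφ2, hφ3]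
  -- the key Lie-theoretic identities
  have hXY := lemXY B hBsymm hBinv hBnd e e' hdual σ hσinv hσlie
  have hXY' : (∑ j, ∑ i, ⁅e j + σ (e j), e i + σ (e i)⁆ ⊗ₜ[K] (e' j ⊗ₜ[K] e' i))
      + (∑ j, ∑ i, (e j + σ (e j)) ⊗ₜ[K] (⁅e' j, e i + σ (e i)⁆ ⊗ₜ[K] e' i)) = 0 := by
    rw [← Finset.sum_add_distrib, ← hXY]
    exact Finset.sum_congr rfl fun j _ => by rw [← Finset.sum_add_distrib]
  have hY : (∑ j, ∑ i, (e j + σ (e j)) ⊗ₜ[K] (⁅e' j, e i + σ (e i)⁆ ⊗ₜ[K] e' i))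
      = -(∑ j, ∑ i, ⁅e j + σ (e j), e i + σ (e i)⁆ ⊗ₜ[K] (e' j ⊗ₜ[K] e' i)) :=
    eq_neg_of_add_eq_zero_right hXY'
  have hZ := lemZX B hBsymm hBinv hBnd e e' hdual σ hσinv hσlie hσB
  rw [hY, hZ, map_neg]
  have hne12 : f l1 - f l2 ≠ 0 := sub_ne_zero.mpr h12
  have hne13 : f l1 - f l3 ≠ 0 := sub_ne_zero.mpr h13
  have hne23 : f l2 - f l3 ≠ 0 := sub_ne_zero.mpr h23
  have hne32 : f l3 - f l2 ≠ 0 := sub_ne_zero.mpr (Ne.symm h23)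
  match_scalars
  rw [hα, hβ, hγ, hδ]
  field_simp
  ring
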